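/- (Closedness of the hierarchy 1-forms for an invariant metric.) Under the hypotheses of the recursion lemma — c^i_{jk} smooth and symmetric in the lower indices, g constant symmetric nondegenerate and invariant (Σ_k c^i_{jk} g^{kl} = Σ_k c^l_{jk} g^{ki}), X, X̃ smooth with ∂_j X^i = Σ_k c^i_{jk} X̃^k, and ω_i := Σ_k g_{ki} X^k — the 1-form ω is closed: ∂_j ω_i − ∂_i ω_j = 0 for all i, j. -/

import Mathlib

open Finset

/-- The partial derivative `∂F/∂u^k` of a smooth function of `u = (u¹,…,uⁿ)`. -/
noncomputable def pder {n : ℕ} (F : (Fin n → ℝ) → ℝ) (k : Fin n)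
    (x : Fin n → ℝ) : ℝ :=
  fderiv ℝ F x (Pi.single k 1)

lemma pder_sum {n : ℕ} (a : Fin n → ℝ) (X : Fin n → (Fin n → ℝ) → ℝ) (j : Fin n)
    (x : Fin n → ℝ) (hd : ∀ k, DifferentiableAt ℝ (X k) x) :
    pder (fun y => ∑ k, a k * X k y) j x = ∑ k, a k * pder (X k) j x := by
  have h : HasFDerivAt (fun y => ∑ k, a k * X k y)
      (∑ k, a k • fderiv ℝ (X k) x) x := by
    apply HasFDerivAt.fun_sum
    intro k _
    exact ((hd k).hasFDerivAt).const_mul (a k)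
  rw [pder, h.fderiv]
  simp [pder, ContinuousLinearMap.sum_apply]

/-- **closedness of the hierarchy 1-forms for an invariant
metric.** Under the hypotheses of the recursion lemma — `c^i_{jk}` smooth and
symmetric in the lower indices, `g` constant symmetric nondegenerate and
invariant (`Σ_k c^i_{jk} g^{kl} = Σ_k c^l_{jk} g^{ki}`), `X, X̃` smooth with
`∂_j X^i = Σ_k c^i_{jk} X̃^k`, and `ω_i := Σ_k g_{ki} X^k` — the 1-form `ω`
is closed: `∂_j ω_i − ∂_i ω_j = 0` for all `i, j`. -/
theorem hierarchy_one_forms_closed {n : ℕ} (hn : 1 ≤ n)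
    (U : Set (Fin n → ℝ)) (hU : IsOpen U)
    (c : Fin n → Fin n → Fin n → (Fin n → ℝ) → ℝ)
    (hc_smooth : ∀ i j k, ContDiffOn ℝ (⊤ : ℕ∞) (c i j k) U)
    (hc_symm : ∀ i j k, ∀ x ∈ U, c i j k x = c i k j x)
    (g ginv : Fin n → Fin n → ℝ)
    (hg_symm : ∀ i j, g i j = g j i)
    (hg_inv : ∀ i j, ∑ k, g i k * ginv k j = if i = j then (1 : ℝ) else 0)
    (hg_invariant : ∀ i j l, ∀ x ∈ U,
      ∑ k, c i j k x * ginv k l = ∑ k, c l j k x * ginv k i)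
    (X Xt : Fin n → (Fin n → ℝ) → ℝ)
    (hX_smooth : ∀ i, ContDiffOn ℝ (⊤ : ℕ∞) (X i) U)
    (hXt_smooth : ∀ i, ContDiffOn ℝ (⊤ : ℕ∞) (Xt i) U)
    (hrec : ∀ i j, ∀ x ∈ U, pder (X i) j x = ∑ k, c i j k x * Xt k x) :
    ∀ i j, ∀ x ∈ U,
      pder (fun y => ∑ k, g k i * X k y) j x
        - pder (fun y => ∑ k, g k j * X k y) i x = 0 := by
  -- inverse also on the left
  have hinv' : ∀ a b, ∑ l, ginv a l * g l b = if a = b then (1 : ℝ) else 0 := by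
    have h1 : (Matrix.of g) * (Matrix.of ginv) = 1 := by
      ext i j
      simpa [Matrix.mul_apply, Matrix.one_apply] using hg_inv i j
    have h2 := mul_eq_one_comm.mp h1
    intro a b
    have := congrFun (congrFun h2 a) b
    simpa [Matrix.mul_apply, Matrix.one_apply] using this
  intro i j x hx
  -- key symmetry: ∑ k, g k i * c k j m x = ∑ k, g k j * c k i m x
  have expand : ∀ (m p k : Fin n),
      c k m p x = ∑ l, (∑ a, c k m a x * ginv a l) * g l p := by
    intro m p k
    calc c k m p x = ∑ a, c k m a x * (if a = p then (1 : ℝ) else 0) := by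
          simp [mul_ite]
      _ = ∑ a, c k m a x * ∑ l, ginv a l * g l p := by
          refine Finset.sum_congr rfl fun a _ => ?_
          rw [hinv']
      _ = ∑ l, (∑ a, c k m a x * ginv a l) * g l p := by
          simp only [Finset.mul_sum, Finset.sum_mul]
          rw [Finset.sum_comm]
          exact Finset.sum_congr rfl fun l _ => Finset.sum_congr rfl fun a _ => by ring
  have key : ∀ (i j m : Fin n),
      ∑ k, g k i * c k j m x = ∑ k, g k j * c k i m x := by
    intro i j m
    calc ∑ k, g k i * c k j m x
        = ∑ k, g k i * c k m j x := by
          exact Finset.sum_congr rfl fun k _ => by rw [hc_symm k j m x hx]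
      _ = ∑ k, g k i * ∑ l, (∑ a, c k m a x * ginv a l) * g l j := by
          exact Finset.sum_congr rfl fun k _ => by rw [← expand m j k]
      _ = ∑ k, g k i * ∑ l, (∑ a, c l m a x * ginv a k) * g l j := by
          refine Finset.sum_congr rfl fun k _ => ?_
          congr 1
          exact Finset.sum_congr rfl fun l _ => by rw [hg_invariant k m l x hx]
      _ = ∑ l, (∑ k, (∑ a, c l m a x * ginv a k) * g k i) * g l j := by
          simp only [Finset.mul_sum, Finset.sum_mul]
          rw [Finset.sum_comm]
          exact Finset.sum_congr rfl fun l _ => Finset.sum_congr rfl fun k _ =>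
            Finset.sum_congr rfl fun a _ => by ring
      _ = ∑ l, c l m i x * g l j := by
          exact Finset.sum_congr rfl fun l _ => by rw [← expand m i l]
      _ = ∑ k, g k j * c k i m x := by
          refine Finset.sum_congr rfl fun k _ => ?_
          rw [hc_symm k m i x hx, hc_symm k i m x hx]
          ring
  have hdX : ∀ k, DifferentiableAt ℝ (X k) x := fun k =>
    ((hX_smooth k).contDiffAt (hU.mem_nhds hx)).differentiableAt (by simp)
  rw [pder_sum _ _ _ _ hdX, pder_sum _ _ _ _ hdX]
  have hswap : ∀ (i j : Fin n),
      ∑ k, g k i * pder (X k) j x = ∑ m, (∑ k, g k i * c k j m x) * Xt m x := by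
    intro i j
    calc ∑ k, g k i * pder (X k) j x
        = ∑ k, g k i * ∑ m, c k j m x * Xt m x := by
          exact Finset.sum_congr rfl fun k _ => by rw [hrec k j x hx]
      _ = ∑ m, (∑ k, g k i * c k j m x) * Xt m x := by
          simp only [Finset.mul_sum, Finset.sum_mul]
          rw [Finset.sum_comm]
          exact Finset.sum_congr rfl fun m _ => Finset.sum_congr rfl fun k _ => by ring
  rw [hswap i j, hswap j i]
  rw [sub_eq_zero]
  exact Finset.sum_congr rfl fun m _ => by rw [key i j m]
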